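/- Let β = (y,v) ∈ 𝓟. (a) If x ∈ P with x ≠ y and v ∈ x^⊥, then |{x, β}^⊥| ≥ 3 in 𝕊. (b) If u' ∈ P' with u ≠ v and u ∈ y^⊥, then |{u', β}^⊥| ≥ 3 in 𝕊. -/

import Mathlib

/- Common setup: the generalized quadrangle of order (2,2) on the edges of a
   6-element set, the near hexagon 𝓢 = ℍ₃, and the near hexagon 𝕊 = DSp(6,2). -/

/-- An edge: a 2-element subset of `Fin 6`. -/
abbrev Edge : Type := {e : Finset (Fin 6) // e.card = 2}

/-- `perp A` is `A^⊥`: the set of edges equal to or disjoint from every element of `A`. -/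
def perp (A : Set Edge) : Set Edge := {y | ∀ x ∈ A, x = y ∨ Disjoint x.1 y.1}

/-- A factor: a set of three pairwise disjoint edges (a perfect matching of `Fin 6`). -/
def IsFactor (T : Set Edge) : Prop :=
  T.ncard = 3 ∧ T.Pairwise (fun x y => Disjoint x.1 y.1)

/-- A triad: a set of three pairwise non-collinear (i.e. pairwise intersecting) distinct
    edges. -/
def IsTriad (T : Set Edge) : Prop :=
  T.ncard = 3 ∧ T.Pairwise (fun x y => ¬ Disjoint x.1 y.1)

/-- A complete triad: a triad not contained in a set of four pairwise non-collinear edges. -/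
def IsCompleteTriad (T : Set Edge) : Prop :=
  IsTriad T ∧
    ¬ ∃ U : Set Edge, T ⊆ U ∧ U.ncard = 4 ∧ U.Pairwise (fun x y => ¬ Disjoint x.1 y.1)

/-- The point set 𝓟 of 𝓢 : pairs `(x,u)` of edges with `x = u` or `x ∩ u = ∅`. -/
def NPoint : Type := {p : Edge × Edge // p.1 = p.2 ∨ Disjoint p.1.1 p.2.1}

/-- The lines 𝓛 of 𝓢 : sets `{(x, σ x) : x ∈ T}` where `T` is a factor or a complete
    triad and `σ : T → T^⊥` is a bijection. -/
def IsLine (L : Set NPoint) : Prop :=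
  ∃ (T : Set Edge) (σ : Edge → Edge),
    (IsFactor T ∨ IsCompleteTriad T) ∧ Set.BijOn σ T (perp T) ∧
    L = {p : NPoint | p.1.1 ∈ T ∧ p.1.2 = σ p.1.1}

/-- The collinearity graph of 𝓢. -/
def NG : SimpleGraph NPoint where
  Adj α β := α ≠ β ∧ ∃ L, IsLine L ∧ α ∈ L ∧ β ∈ L
  symm := ⟨fun _ _ ⟨h, L, hL, ha, hb⟩ => ⟨h.symm, L, hL, hb, ha⟩⟩
  loopless := ⟨fun _ h => h.1 rfl⟩

/-- The point set ℙ of 𝕊 : the disjoint union 𝓟 ⊔ P ⊔ P' where `P` and `P'` are two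
    copies of the edge set. -/
def BPoint : Type := NPoint ⊕ Edge ⊕ Edge

/-- Embedding of 𝓟 into ℙ. -/
def inS (p : NPoint) : BPoint := Sum.inl p

/-- Embedding of the first copy `P` of the edge set into ℙ (an edge `x` gives `x ∈ P`). -/
def inP (x : Edge) : BPoint := Sum.inr (Sum.inl x)

/-- Embedding of the second copy `P'` of the edge set into ℙ (an edge `u` gives `u' ∈ P'`). -/
def inP' (u : Edge) : BPoint := Sum.inr (Sum.inr u)

/-- The lines 𝕃 of 𝕊 : the lines of 𝓛 together with the lines `{x, (x,u), u'}`
    for `(x,u) ∈ 𝓟` (the latter being the lines of type `𝕃₁`). -/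
def IsBLine (L : Set BPoint) : Prop :=
  (∃ L₀ : Set NPoint, IsLine L₀ ∧ L = inS '' L₀) ∨
  (∃ p : NPoint, L = {inP p.1.1, inS p, inP' p.1.2})

/-- The collinearity graph of 𝕊. -/
def BG : SimpleGraph BPoint where
  Adj α β := α ≠ β ∧ ∃ L, IsBLine L ∧ α ∈ L ∧ β ∈ L
  symm := ⟨fun _ _ ⟨h, L, hL, ha, hb⟩ => ⟨h.symm, L, hL, hb, ha⟩⟩
  loopless := ⟨fun _ h => h.1 rfl⟩

section Aux
lemma subset_compl_of_disjoint {s t : Finset (Fin 6)} (h : Disjoint t s) : s ⊆ tᶜ :=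
  fun m hm => Finset.mem_compl.2 fun hmt => (Finset.disjoint_left.1 h) hmt hm

lemma edge_ne_of_disjoint {a b : Edge} (h : Disjoint a.1 b.1) : a ≠ b := by
  intro heq
  rw [heq, disjoint_self] at h
  have := b.2
  rw [h] at this
  simp at this

lemma ncard3 {α : Type*} [Finite α] {a b c : α} (hab : a ≠ b) (hac : a ≠ c) (hbc : b ≠ c) :
    ({a,b,c} : Set α).ncard = 3 := by
  rw [Set.ncard_insert_of_notMem (by simp [hab, hac]), Set.ncard_insert_of_notMem (by simp [hbc]),
    Set.ncard_singleton]

lemma pairwise3 {α : Type*} {R : α → α → Prop} {a b c : α} (h1 : R a b) (h2 : R b a)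
    (h3 : R a c) (h4 : R c a) (h5 : R b c) (h6 : R c b) : ({a,b,c} : Set α).Pairwise R := by
  intro p hp q hq hne
  simp only [Set.mem_insert_iff, Set.mem_singleton_iff] at hp hq
  rcases hp with rfl | rfl | rfl <;> rcases hq with rfl | rfl | rfl <;>
    first | exact absurd rfl hne | assumption

lemma triple_relabel {α : Type*} {a b c d : α} (hab : a ≠ b) (hac : a ≠ c) (hbc : b ≠ c)
    (hd : d = a ∨ d = b ∨ d = c) :
    ∃ f g, d ≠ f ∧ d ≠ g ∧ f ≠ g ∧ ({a,b,c} : Set α) = {d,f,g} := by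
  rcases hd with rfl|rfl|rfl
  · exact ⟨b, c, hab, hac, hbc, rfl⟩
  · exact ⟨a, c, hab.symm, hbc, hac, by ext t; simp; tauto⟩
  · exact ⟨a, b, hac.symm, hbc.symm, hab, by ext t; simp; tauto⟩

def tfun (a₁ a₂ : Edge) (b₁ b₂ b₃ : Edge) : Edge → Edge :=
  fun e => if e = a₁ then b₁ else if e = a₂ then b₂ else b₃

lemma tfun1 {a₁ a₂ b₁ b₂ b₃ : Edge} : tfun a₁ a₂ b₁ b₂ b₃ a₁ = b₁ := if_pos rfl

lemma tfun2 {a₁ a₂ b₁ b₂ b₃ : Edge} (h : a₂ ≠ a₁) : tfun a₁ a₂ b₁ b₂ b₃ a₂ = b₂ := by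
  unfold tfun; rw [if_neg h, if_pos rfl]

lemma tfun3 {a₁ a₂ b₁ b₂ b₃ : Edge} {e : Edge} (h1 : e ≠ a₁) (h2 : e ≠ a₂) :
    tfun a₁ a₂ b₁ b₂ b₃ e = b₃ := by
  unfold tfun; rw [if_neg h1, if_neg h2]

lemma bij_triple {a₁ a₂ a₃ b₁ b₂ b₃ : Edge} (h12 : a₁ ≠ a₂) (h13 : a₁ ≠ a₃) (h23 : a₂ ≠ a₃)
    (g12 : b₁ ≠ b₂) (g13 : b₁ ≠ b₃) (g23 : b₂ ≠ b₃) :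
    Set.BijOn (tfun a₁ a₂ b₁ b₂ b₃) ({a₁,a₂,a₃} : Set Edge) ({b₁,b₂,b₃} : Set Edge) := by
  have e1 : tfun a₁ a₂ b₁ b₂ b₃ a₁ = b₁ := tfun1
  have e2 : tfun a₁ a₂ b₁ b₂ b₃ a₂ = b₂ := tfun2 h12.symm
  have e3 : tfun a₁ a₂ b₁ b₂ b₃ a₃ = b₃ := tfun3 h13.symm h23.symm
  refine ⟨?_, ?_, ?_⟩
  · intro e he
    simp only [Set.mem_insert_iff, Set.mem_singleton_iff] at he ⊢
    rcases he with rfl|rfl|rfl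
    · rw [e1]; tauto
    · rw [e2]; tauto
    · rw [e3]; tauto
  · intro e he f hf hef
    simp only [Set.mem_insert_iff, Set.mem_singleton_iff] at he hf
    rcases he with rfl|rfl|rfl <;> rcases hf with rfl|rfl|rfl <;>
      simp only [e1, e2, e3] at hef <;>
      first | rfl | (exact absurd hef (by assumption)) |
        (exact absurd hef.symm (by assumption))
  · intro t ht
    simp only [Set.mem_insert_iff, Set.mem_singleton_iff] at ht
    rcases ht with rfl|rfl|rfl
    · exact ⟨a₁, by simp, e1⟩
    · exact ⟨a₂, by simp, e2⟩
    · exact ⟨a₃, by simp, e3⟩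

lemma factor_lemma (a b : Edge) (hab : Disjoint a.1 b.1) :
    ∃ c : Edge, a ≠ b ∧ a ≠ c ∧ b ≠ c ∧ Disjoint a.1 c.1 ∧ Disjoint b.1 c.1 ∧
      IsFactor {a,b,c} ∧ perp ({a,b,c} : Set Edge) = {a,b,c} ∧
      ∀ e : Edge, Disjoint a.1 e.1 → Disjoint b.1 e.1 → e = c := by
  have hcard : ((a.1 ∪ b.1)ᶜ : Finset (Fin 6)).card = 2 := by
    rw [Finset.card_compl, Finset.card_union_of_disjoint hab, a.2, b.2]
    simp
  set c : Edge := ⟨(a.1 ∪ b.1)ᶜ, hcard⟩ with hc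
  have hac : Disjoint a.1 c.1 := by
    exact Finset.disjoint_left.2 fun m hm hmc => (Finset.mem_compl.1 hmc)
      (Finset.mem_union_left _ hm)
  have hbc : Disjoint b.1 c.1 := by
    exact Finset.disjoint_left.2 fun m hm hmc => (Finset.mem_compl.1 hmc)
      (Finset.mem_union_right _ hm)
  have huniq : ∀ e : Edge, Disjoint a.1 e.1 → Disjoint b.1 e.1 → e = c := by
    intro e hea heb
    have h1 : e.1 ⊆ (a.1 ∪ b.1)ᶜ := by
      intro m hm
      rw [Finset.mem_compl, Finset.mem_union]
      rintro (h | h)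
      · exact (Finset.disjoint_left.1 hea) h hm
      · exact (Finset.disjoint_left.1 heb) h hm
    exact Subtype.ext (Finset.eq_of_subset_of_card_le h1 (by rw [e.2, hcard]))
  refine ⟨c, edge_ne_of_disjoint hab, edge_ne_of_disjoint hac, edge_ne_of_disjoint hbc,
    hac, hbc, ⟨ncard3 (edge_ne_of_disjoint hab) (edge_ne_of_disjoint hac)
      (edge_ne_of_disjoint hbc), pairwise3 hab hab.symm hac hac.symm hbc hbc.symm⟩, ?_, huniq⟩
  ext e
  simp only [perp, Set.mem_setOf_eq, Set.mem_insert_iff, Set.mem_singleton_iff]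
  constructor
  · intro h
    by_cases hea : e = a
    · exact Or.inl hea
    by_cases heb : e = b
    · exact Or.inr (Or.inl heb)
    rcases h a (by simp) with h' | h'
    · exact Or.inl h'.symm
    rcases h b (by simp) with h'' | h''
    · exact Or.inr (Or.inl h''.symm)
    exact Or.inr (Or.inr (huniq e h' h''))
  · rintro (rfl | rfl | rfl) <;> rintro t (rfl | rfl | rfl) <;>
      first
      | exact Or.inl rfl
      | exact Or.inr hab | exact Or.inr hab.symm
      | exact Or.inr hac | exact Or.inr hac.symm
      | exact Or.inr hbc | exact Or.inr hbc.symm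

/-- The edge with endpoints `p ≠ q`. -/
def mkE (p q : Fin 6) (h : p ≠ q) : Edge := ⟨{p,q}, Finset.card_pair h⟩

lemma mkE_ne_left {p q r : Fin 6} (hpq : p ≠ q) (hpr : p ≠ r) (hqr : q ≠ r) :
    mkE p q hpq ≠ mkE p r hpr := by
  intro h
  have h1 : q ∈ ({p,r} : Finset (Fin 6)) := by
    rw [show ({p,r} : Finset (Fin 6)) = (mkE p r hpr).1 from rfl, ← h]
    simp [mkE]
  simp only [Finset.mem_insert, Finset.mem_singleton] at h1
  rcases h1 with rfl | rfl
  · exact hpq rfl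
  · exact hqr rfl

lemma mkE_ne_out {p q r s : Fin 6} (hpq : p ≠ q) (hrs : r ≠ s) (h1 : p ≠ r) (h2 : p ≠ s) :
    mkE p q hpq ≠ mkE r s hrs := by
  intro h
  have hp : p ∈ ({r,s} : Finset (Fin 6)) := by
    rw [show ({r,s} : Finset (Fin 6)) = (mkE r s hrs).1 from rfl, ← h]
    simp [mkE]
  simp only [Finset.mem_insert, Finset.mem_singleton] at hp
  tauto

lemma pair_repr {w : Edge} {m : Fin 6} (hm : m ∈ w.1) : ∃ n, m ≠ n ∧ w.1 = {m, n} := by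
  obtain ⟨s, t, hst, hw⟩ := Finset.card_eq_two.1 w.2
  rw [hw] at hm
  rcases Finset.mem_insert.1 hm with rfl | hm'
  · exact ⟨t, hst, hw⟩
  · rcases Finset.mem_singleton.1 hm' with rfl
    exact ⟨s, hst.symm, by rw [hw, Finset.pair_comm]⟩

lemma edge_subset_three {p q r : Fin 6} (hpq : p ≠ q) (hpr : p ≠ r) (hqr : q ≠ r) (e : Edge)
    (he : e.1 ⊆ {p,q,r}) : e = mkE p q hpq ∨ e = mkE p r hpr ∨ e = mkE q r hqr := by
  obtain ⟨s, t, hst, hes⟩ := Finset.card_eq_two.1 e.2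
  have hs : s ∈ ({p,q,r} : Finset (Fin 6)) := he (by rw [hes]; simp)
  have ht : t ∈ ({p,q,r} : Finset (Fin 6)) := he (by rw [hes]; simp)
  simp only [Finset.mem_insert, Finset.mem_singleton] at hs ht
  rcases hs with rfl|rfl|rfl <;> rcases ht with rfl|rfl|rfl <;>
    first
    | exact absurd rfl hst
    | (exact Or.inl (Subtype.ext (by rw [hes]; rfl)))
    | (exact Or.inl (Subtype.ext (by rw [hes, Finset.pair_comm]; rfl)))
    | (exact Or.inr (Or.inl (Subtype.ext (by rw [hes]; rfl))))
    | (exact Or.inr (Or.inl (Subtype.ext (by rw [hes, Finset.pair_comm]; rfl))))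
    | (exact Or.inr (Or.inr (Subtype.ext (by rw [hes]; rfl))))
    | (exact Or.inr (Or.inr (Subtype.ext (by rw [hes, Finset.pair_comm]; rfl))))

lemma complete_of (T : Set Edge) (hT : IsTriad T)
    (h : ∀ w : Edge, (∀ t ∈ T, ¬Disjoint t.1 w.1) → w ∈ T) : IsCompleteTriad T := by
  refine ⟨hT, ?_⟩
  rintro ⟨U, hTU, hU4, hUp⟩
  have hne : T ≠ U := by
    intro hEq; rw [← hEq, hT.1] at hU4; omega
  obtain ⟨w, hwU, hwT⟩ := Set.exists_of_ssubset ⟨hTU, fun hUT => hne (le_antisymm hTU hUT)⟩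
  refine hwT (h w fun t ht hdisj => ?_)
  exact (hUp (hTU ht) hwU (fun h' => hwT (h' ▸ ht))) hdisj

section Triangle
variable {p q r : Fin 6} (hpq : p ≠ q) (hpr : p ≠ r) (hqr : q ≠ r)

lemma tri_perp : perp {mkE p q hpq, mkE p r hpr, mkE q r hqr} =
    {e : Edge | e.1 ⊆ ({p,q,r} : Finset (Fin 6))ᶜ} := by
  have hab := mkE_ne_left hpq hpr hqr
  have hac := mkE_ne_out hpq hqr hpq hpr
  have hbc := mkE_ne_out hpr hqr hpq hpr
  ext e
  simp only [perp, Set.mem_setOf_eq]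
  constructor
  · intro h
    intro m hm
    rw [Finset.mem_compl]
    intro hmC
    have key : ∀ u₁ u₂ : Edge, u₁ ∈ ({mkE p q hpq, mkE p r hpr, mkE q r hqr} : Set Edge) →
        u₂ ∈ ({mkE p q hpq, mkE p r hpr, mkE q r hqr} : Set Edge) → u₁ ≠ u₂ →
        m ∈ u₁.1 → m ∈ u₂.1 → False := by
      intro u₁ u₂ h1 h2 h12 hm1 hm2
      rcases h u₁ h1 with h' | h'
      · rcases h u₂ h2 with h'' | h''
        · exact h12 (h'.trans h''.symm)
        · exact (Finset.disjoint_left.1 h'') hm2 hm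
      · exact (Finset.disjoint_left.1 h') hm1 hm
    simp only [Finset.mem_insert, Finset.mem_singleton] at hmC
    rcases hmC with rfl|rfl|rfl
    · exact key _ _ (by simp) (by simp) hab (by simp [mkE]) (by simp [mkE])
    · exact key _ _ (by simp) (by simp) hac (by simp [mkE]) (by simp [mkE])
    · exact key _ _ (by simp) (by simp) hbc (by simp [mkE]) (by simp [mkE])
  · intro he t ht
    simp only [Set.mem_insert_iff, Set.mem_singleton_iff] at ht
    right
    refine Finset.disjoint_left.2 fun m hmt hme => ?_
    have := Finset.mem_compl.1 (he hme)
    rcases ht with rfl|rfl|rfl <;> apply this <;>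
      revert hmt <;> simp [mkE, Finset.mem_insert, Finset.mem_singleton] <;> tauto

lemma tri_complete : IsCompleteTriad {mkE p q hpq, mkE p r hpr, mkE q r hqr} := by
  have hab := mkE_ne_left hpq hpr hqr
  have hac := mkE_ne_out hpq hqr hpq hpr
  have hbc := mkE_ne_out hpr hqr hpq hpr
  have meet : ∀ (u₁ u₂ : Edge) (m : Fin 6), m ∈ u₁.1 → m ∈ u₂.1 → ¬Disjoint u₁.1 u₂.1 :=
    fun u₁ u₂ m h1 h2 hd => (Finset.disjoint_left.1 hd) h1 h2
  refine complete_of _ ⟨ncard3 hab hac hbc, pairwise3 ?_ ?_ ?_ ?_ ?_ ?_⟩ ?_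
  · exact meet _ _ p (by simp [mkE]) (by simp [mkE])
  · exact meet _ _ p (by simp [mkE]) (by simp [mkE])
  · exact meet _ _ q (by simp [mkE]) (by simp [mkE])
  · exact meet _ _ q (by simp [mkE]) (by simp [mkE])
  · exact meet _ _ r (by simp [mkE]) (by simp [mkE])
  · exact meet _ _ r (by simp [mkE]) (by simp [mkE])
  · intro w hw
    have hsub : w.1 ⊆ ({p,q,r} : Finset (Fin 6)) := by
      intro m hm
      by_contra hmC
      obtain ⟨n, hmn, hwmn⟩ := pair_repr hm
      have hn : ∀ u : Edge, u ∈ ({mkE p q hpq, mkE p r hpr, mkE q r hqr} : Set Edge) →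
          u.1 ⊆ ({p,q,r} : Finset (Fin 6)) → n ∈ u.1 := by
        intro u hu husub
        have := hw u hu
        rw [Finset.not_disjoint_iff] at this
        obtain ⟨k, hku, hkw⟩ := this
        rw [hwmn] at hkw
        rcases Finset.mem_insert.1 hkw with rfl | hk
        · exact absurd (husub hku) hmC
        · rw [Finset.mem_singleton.1 hk] at hku; exact hku
      have hna : n ∈ ({p,q} : Finset (Fin 6)) :=
        hn (mkE p q hpq) (by simp) (by intro z hz; simp [mkE] at hz ⊢; tauto)
      have hnb : n ∈ ({p,r} : Finset (Fin 6)) :=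
        hn (mkE p r hpr) (by simp) (by intro z hz; simp [mkE] at hz ⊢; tauto)
      have hnc : n ∈ ({q,r} : Finset (Fin 6)) :=
        hn (mkE q r hqr) (by simp) (by intro z hz; simp [mkE] at hz ⊢; tauto)
      simp only [Finset.mem_insert, Finset.mem_singleton] at hna hnb hnc
      rcases hna with rfl|rfl
      · rcases hnc with h''|h''
        · exact hpq h''
        · exact hpr h''
      · rcases hnb with h'|h'
        · exact hpq h'.symm
        · exact hqr h' 
    rcases edge_subset_three hpq hpr hqr w hsub with rfl|rfl|rfl <;> simp
end Triangle

lemma tri_lemma (a b d : Edge) (hab : a ≠ b) (hmeet : ¬Disjoint a.1 b.1)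
    (hda : Disjoint a.1 d.1) (hdb : Disjoint b.1 d.1) :
    ∃ c e f : Edge, a ≠ c ∧ b ≠ c ∧ d ≠ e ∧ d ≠ f ∧ e ≠ f ∧
      IsCompleteTriad {a,b,c} ∧ IsCompleteTriad {d,e,f} ∧
      perp ({a,b,c} : Set Edge) = {d,e,f} ∧ perp ({d,e,f} : Set Edge) = {a,b,c} := by
  obtain ⟨p, hpa, hpb⟩ := Finset.not_disjoint_iff.1 hmeet
  obtain ⟨q, hpq, ha⟩ := pair_repr hpa
  obtain ⟨r, hpr, hb⟩ := pair_repr hpb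
  have hqr : q ≠ r := by
    rintro rfl
    exact hab (Subtype.ext (ha.trans hb.symm))
  have haE : a = mkE p q hpq := Subtype.ext ha
  have hbE : b = mkE p r hpr := Subtype.ext hb
  subst haE hbE
  have hCcard : ({p,q,r} : Finset (Fin 6)).card = 3 := by
    rw [Finset.card_insert_of_notMem (by simp [hpq, hpr]),
      Finset.card_insert_of_notMem (by simp [hqr]), Finset.card_singleton]
  have hCc : (({p,q,r} : Finset (Fin 6))ᶜ).card = 3 := by
    rw [Finset.card_compl, hCcard]; rfl
  obtain ⟨p', q', r', h1, h2, h3, hCc'⟩ := Finset.card_eq_three.1 hCc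
  have hsub_iff : ∀ e : Edge, e.1 ⊆ ({p,q,r} : Finset (Fin 6))ᶜ ↔
      (e = mkE p' q' h1 ∨ e = mkE p' r' h2 ∨ e = mkE q' r' h3) := by
    intro e
    constructor
    · intro h
      exact edge_subset_three h1 h2 h3 e (by rw [← hCc']; exact h)
    · rintro (rfl|rfl|rfl) <;> rw [hCc'] <;> intro z hz <;>
        simp only [mkE, Finset.mem_insert, Finset.mem_singleton] at hz ⊢ <;> tauto
  have hperp1 : perp ({mkE p q hpq, mkE p r hpr, mkE q r hqr} : Set Edge) =
      {mkE p' q' h1, mkE p' r' h2, mkE q' r' h3} := by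
    rw [tri_perp hpq hpr hqr]
    ext e
    simpa only [Set.mem_setOf_eq, Set.mem_insert_iff, Set.mem_singleton_iff] using hsub_iff e
  have hperp2 : perp ({mkE p' q' h1, mkE p' r' h2, mkE q' r' h3} : Set Edge) =
      {mkE p q hpq, mkE p r hpr, mkE q r hqr} := by
    rw [tri_perp h1 h2 h3]
    have hcc : ({p',q',r'} : Finset (Fin 6))ᶜ = {p,q,r} := by rw [← hCc', compl_compl]
    ext e
    simp only [Set.mem_setOf_eq, Set.mem_insert_iff, Set.mem_singleton_iff, hcc]
    constructor
    · exact fun h => edge_subset_three hpq hpr hqr e h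
    · rintro (rfl|rfl|rfl) <;> intro z hz <;>
        simp only [mkE, Finset.mem_insert, Finset.mem_singleton] at hz ⊢ <;> tauto
  have hdsub : d.1 ⊆ ({p,q,r} : Finset (Fin 6))ᶜ := by
    intro m hm
    rw [Finset.mem_compl]
    intro hmC
    simp only [Finset.mem_insert, Finset.mem_singleton] at hmC
    rcases hmC with rfl|rfl|rfl
    · exact (Finset.disjoint_left.1 hda) (by simp [mkE]) hm
    · exact (Finset.disjoint_left.1 hda) (by simp [mkE]) hm
    · exact (Finset.disjoint_left.1 hdb) (by simp [mkE]) hm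
  have hd_mem := (hsub_iff d).1 hdsub
  have d12 : mkE p' q' h1 ≠ mkE p' r' h2 := mkE_ne_left h1 h2 h3
  have d13 : mkE p' q' h1 ≠ mkE q' r' h3 := mkE_ne_out h1 h3 h1 h2
  have d23 : mkE p' r' h2 ≠ mkE q' r' h3 := mkE_ne_out h2 h3 h1 h2
  obtain ⟨e, f, hde, hdf, hef, hset⟩ := triple_relabel d12 d13 d23 hd_mem
  refine ⟨mkE q r hqr, e, f, mkE_ne_out hpq hqr hpq hpr, mkE_ne_out hpr hqr hpq hpr,
    hde, hdf, hef, tri_complete hpq hpr hqr, ?_, ?_, ?_⟩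
  · rw [← hset]; exact tri_complete h1 h2 h3
  · rw [hperp1, hset]
  · rw [← hset, hperp2]

instance : Finite NPoint := by unfold NPoint; infer_instance
instance : Finite BPoint := by unfold BPoint; infer_instance

lemma three_le_ncard {S : Set BPoint} {a b c : BPoint} (ha : a ∈ S) (hb : b ∈ S) (hc : c ∈ S)
    (hab : a ≠ b) (hac : a ≠ c) (hbc : b ≠ c) : 3 ≤ S.ncard := by
  have h1 : ({a,b,c} : Set BPoint).ncard = 3 := ncard3 hab hac hbc
  have h2 : ({a,b,c} : Set BPoint).ncard ≤ S.ncard := by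
    refine Set.ncard_le_ncard ?_ (Set.toFinite S)
    intro t ht
    rcases Set.mem_insert_iff.1 ht with rfl | ht'
    · exact ha
    rcases Set.mem_insert_iff.1 ht' with rfl | ht''
    · exact hb
    rcases Set.mem_singleton_iff.1 ht'' with rfl
    exact hc
  omega

lemma adj_inP_inS (p : NPoint) : BG.Adj (inP p.1.1) (inS p) :=
  ⟨(by intro h; cases h), {inP p.1.1, inS p, inP' p.1.2}, Or.inr ⟨p, rfl⟩, by simp, by simp⟩

lemma adj_inP'_inS (p : NPoint) : BG.Adj (inP' p.1.2) (inS p) :=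
  ⟨(by intro h; cases h), {inP p.1.1, inS p, inP' p.1.2}, Or.inr ⟨p, rfl⟩, by simp, by simp⟩

lemma adj_inP_inP' (p : NPoint) : BG.Adj (inP p.1.1) (inP' p.1.2) :=
  ⟨(by intro h; cases h), {inP p.1.1, inS p, inP' p.1.2},
    Or.inr ⟨p, rfl⟩, by simp, by simp⟩

lemma adj_NL {T : Set Edge} {σ : Edge → Edge} (hT : IsFactor T ∨ IsCompleteTriad T)
    (hbij : Set.BijOn σ T (perp T)) (p q : NPoint) (hp1 : p.1.1 ∈ T) (hp2 : p.1.2 = σ p.1.1)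
    (hq1 : q.1.1 ∈ T) (hq2 : q.1.2 = σ q.1.1) (hne : p.1.1 ≠ q.1.1) :
    BG.Adj (inS p) (inS q) := by
  refine ⟨?_, inS '' {r : NPoint | r.1.1 ∈ T ∧ r.1.2 = σ r.1.1},
    Or.inl ⟨_, ⟨T, σ, hT, hbij, rfl⟩, rfl⟩, ⟨p, ⟨hp1, hp2⟩, rfl⟩, ⟨q, ⟨hq1, hq2⟩, rfl⟩⟩
  intro h
  simp only [inS] at h
  injection h with h2
  exact hne (congrArg (fun t : NPoint => t.1.1) h2)

lemma glueA (β : NPoint) (x z f g : Edge)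
    (hxv : β.1.2 ∈ perp {x}) (hxy : x ≠ β.1.1)
    (hxz : x ≠ z) (hyz : β.1.1 ≠ z)
    (hvf : β.1.2 ≠ f) (hvg : β.1.2 ≠ g) (hfg : f ≠ g)
    (hT : IsFactor {x, β.1.1, z} ∨ IsCompleteTriad {x, β.1.1, z})
    (hperp : perp ({x, β.1.1, z} : Set Edge) = {β.1.2, f, g}) :
    3 ≤ {γ : BPoint | BG.Adj γ (inP x) ∧ BG.Adj γ (inS β)}.ncard := by
  have hfperp : f ∈ perp ({x, β.1.1, z} : Set Edge) := by rw [hperp]; simp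
  have hgperp : g ∈ perp ({x, β.1.1, z} : Set Edge) := by rw [hperp]; simp
  have hxf := hfperp x (by simp)
  have hxg := hgperp x (by simp)
  have hdom : ({β.1.1, x, z} : Set Edge) = {x, β.1.1, z} := Set.insert_comm _ _ _
  have hbij1 : Set.BijOn (tfun β.1.1 x β.1.2 f g) ({x, β.1.1, z} : Set Edge)
      (perp ({x, β.1.1, z} : Set Edge)) := by
    rw [hperp, ← hdom]
    exact bij_triple hxy.symm hyz hxz hvf hvg hfg
  have hbij2 : Set.BijOn (tfun β.1.1 x β.1.2 g f) ({x, β.1.1, z} : Set Edge)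
      (perp ({x, β.1.1, z} : Set Edge)) := by
    rw [hperp, ← hdom]
    have h' : ({β.1.2, f, g} : Set Edge) = {β.1.2, g, f} := by rw [Set.pair_comm]
    rw [h']
    exact bij_triple hxy.symm hyz hxz hvg hvf hfg.symm
  have adj2 : BG.Adj (inS (⟨(x,f), hxf⟩ : NPoint)) (inS β) :=
    adj_NL hT hbij1 _ β (by simp) (tfun2 hxy).symm (by simp) tfun1.symm hxy
  have adj3 : BG.Adj (inS (⟨(x,g), hxg⟩ : NPoint)) (inS β) :=
    adj_NL hT hbij2 _ β (by simp) (tfun2 hxy).symm (by simp) tfun1.symm hxy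
  refine three_le_ncard
    (a := inP' β.1.2) (b := inS ⟨(x,f), hxf⟩) (c := inS ⟨(x,g), hxg⟩)
    ⟨(adj_inP_inP' ⟨(x, β.1.2), hxv x rfl⟩).symm, adj_inP'_inS β⟩
    ⟨(adj_inP_inS ⟨(x,f), hxf⟩).symm, adj2⟩
    ⟨(adj_inP_inS ⟨(x,g), hxg⟩).symm, adj3⟩
    (by intro h; cases h) (by intro h; cases h) ?_
  intro h
  simp only [inS] at h
  injection h with h2
  exact hfg (congrArg (fun t : NPoint => t.1.2) h2)

lemma glueB (β : NPoint) (u t1 t2 s3 : Edge)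
    (hu : u ∈ perp {β.1.1})
    (hyt1 : β.1.1 ≠ t1) (hyt2 : β.1.1 ≠ t2) (ht12 : t1 ≠ t2)
    (hvu : β.1.2 ≠ u) (hvs3 : β.1.2 ≠ s3) (hus3 : u ≠ s3)
    (hT : IsFactor {β.1.1, t1, t2} ∨ IsCompleteTriad {β.1.1, t1, t2})
    (hperp : perp ({β.1.1, t1, t2} : Set Edge) = {β.1.2, u, s3}) :
    3 ≤ {γ : BPoint | BG.Adj γ (inP' u) ∧ BG.Adj γ (inS β)}.ncard := by
  have huperp : u ∈ perp ({β.1.1, t1, t2} : Set Edge) := by rw [hperp]; simp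
  have ht1u := huperp t1 (by simp)
  have ht2u := huperp t2 (by simp)
  have hbij1 : Set.BijOn (tfun β.1.1 t1 β.1.2 u s3) ({β.1.1, t1, t2} : Set Edge)
      (perp ({β.1.1, t1, t2} : Set Edge)) := by
    rw [hperp]; exact bij_triple hyt1 hyt2 ht12 hvu hvs3 hus3
  have hbij2 : Set.BijOn (tfun β.1.1 t2 β.1.2 u s3) ({β.1.1, t1, t2} : Set Edge)
      (perp ({β.1.1, t1, t2} : Set Edge)) := by
    rw [hperp]
    have hd : ({β.1.1, t1, t2} : Set Edge) = {β.1.1, t2, t1} := by rw [Set.pair_comm]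
    rw [hd]
    exact bij_triple hyt2 hyt1 ht12.symm hvu hvs3 hus3
  have adj2 : BG.Adj (inS (⟨(t1,u), ht1u⟩ : NPoint)) (inS β) :=
    adj_NL hT hbij1 _ β (by simp) (tfun2 hyt1.symm).symm (by simp) tfun1.symm hyt1.symm
  have adj3 : BG.Adj (inS (⟨(t2,u), ht2u⟩ : NPoint)) (inS β) :=
    adj_NL hT hbij2 _ β (by simp) (tfun2 hyt2.symm).symm (by simp) tfun1.symm hyt2.symm
  refine three_le_ncard
    (a := inP β.1.1) (b := inS ⟨(t1,u), ht1u⟩) (c := inS ⟨(t2,u), ht2u⟩)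
    ⟨adj_inP_inP' ⟨(β.1.1, u), hu β.1.1 rfl⟩, adj_inP_inS β⟩
    ⟨(adj_inP'_inS ⟨(t1,u), ht1u⟩).symm, adj2⟩
    ⟨(adj_inP'_inS ⟨(t2,u), ht2u⟩).symm, adj3⟩
    (by intro h; cases h) (by intro h; cases h) ?_
  intro h
  simp only [inS] at h
  injection h with h2
  exact ht12 (congrArg (fun t : NPoint => t.1.1) h2)

end Aux

/-- Let `β = (y,v) ∈ 𝓟`. (a) If `x ∈ P` with `x ≠ y` and `v ∈ x^⊥`, then
`|{x,β}^⊥| ≥ 3` in 𝕊. (b) If `u' ∈ P'` with `u ≠ v` and `u ∈ y^⊥`, then `|{u',β}^⊥| ≥ 3`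
in 𝕊. -/
theorem statement12 (β : NPoint) :
    (∀ x : Edge, x ≠ β.1.1 → β.1.2 ∈ perp {x} →
      3 ≤ {γ : BPoint | BG.Adj γ (inP x) ∧ BG.Adj γ (inS β)}.ncard) ∧
    (∀ u : Edge, u ≠ β.1.2 → u ∈ perp {β.1.1} →
      3 ≤ {γ : BPoint | BG.Adj γ (inP' u) ∧ BG.Adj γ (inS β)}.ncard) := by
  constructor
  · intro x hxy hxv
    have hv_y : β.1.1 = β.1.2 ∨ Disjoint β.1.1.1 β.1.2.1 := β.2
    have hv_x : x = β.1.2 ∨ Disjoint x.1 β.1.2.1 := hxv x rfl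
    by_cases hd : Disjoint x.1 β.1.1.1
    · obtain ⟨z, _, hxz, hyz, hdxz, hdyz, hfac, hperp, huniq⟩ := factor_lemma x β.1.1 hd
      have hvmem : β.1.2 = x ∨ β.1.2 = β.1.1 ∨ β.1.2 = z := by
        rcases hv_x with h | h
        · exact Or.inl h.symm
        rcases hv_y with h' | h'
        · exact Or.inr (Or.inl h'.symm)
        · exact Or.inr (Or.inr (huniq _ h h'))
      obtain ⟨f, g, hvf, hvg, hfg, hset⟩ := triple_relabel hxy hxz hyz hvmem
      exact glueA β x z f g hxv hxy hxz hyz hvf hvg hfg (Or.inl hfac) (hperp.trans hset)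
    · have hvx : Disjoint x.1 β.1.2.1 := by
        rcases hv_x with h | h
        · exfalso
          rcases hv_y with h' | h'
          · exact hxy (h.trans h'.symm)
          · rw [← h] at h'
            exact hd h'.symm
        · exact h
      have hvy : Disjoint β.1.1.1 β.1.2.1 := by
        rcases hv_y with h' | h'
        · exfalso
          rcases hv_x with h | h
          · exact hxy (h.trans h'.symm)
          · rw [← h'] at h
            exact hd h
        · exact h'
      obtain ⟨c, e, f, hxc, hyc, hve, hvf, hef, htriA, _, hperpA, _⟩ :=
        tri_lemma x β.1.1 β.1.2 hxy hd hvx hvy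
      exact glueA β x c e f hxv hxy hxc hyc hve hvf hef (Or.inr htriA) hperpA
  · intro u huv hu
    have hu' : β.1.1 = u ∨ Disjoint β.1.1.1 u.1 := hu β.1.1 rfl
    rcases β.2 with hyv | hyv
    · -- y = v
      have hdu : Disjoint β.1.1.1 u.1 := by
        rcases hu' with h | h
        · exact absurd (h.symm.trans hyv) huv
        · exact h
      obtain ⟨z, hyu, hyz, huz, _, _, hfac, hperp, _⟩ := factor_lemma β.1.1 u hdu
      refine glueB β u u z z hu hyu hyz huz huv.symm (hyv ▸ hyz) huz (Or.inl hfac)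
        (hperp.trans ?_)
      rw [← hyv]
    · rcases hu' with hyu | hyu
      · -- u = y
        obtain ⟨z, hyv2, hyz, hvz, _, _, hfac, hperp, _⟩ := factor_lemma β.1.1 β.1.2 hyv
        refine glueB β u β.1.2 z z hu hyv2 hyz hvz (hyu ▸ hyv2.symm) hvz (hyu ▸ hyz)
          (Or.inl hfac) (hperp.trans ?_)
        rw [← hyu]
        ext t; simp; tauto
      · by_cases hduv : Disjoint u.1 β.1.2.1
        · obtain ⟨z, hyu2, hyz, huz, hdyz, hduz, hfac, hperp, huniq⟩ := factor_lemma β.1.1 u hyu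
          have hvz : β.1.2 = z := huniq β.1.2 hyv hduv
          subst hvz
          refine glueB β u u β.1.2 β.1.1 hu hyu2 hyz huz huv.symm hyz.symm hyu2.symm
            (Or.inl hfac) (hperp.trans ?_)
          ext t; simp; tauto
        · obtain ⟨c, e, f, huc, hvc, hye, hyf, hef, _, htriD, _, hperpD⟩ :=
            tri_lemma u β.1.2 β.1.1 huv hduv hyu.symm hyv.symm
          refine glueB β u e f c hu hye hyf hef huv.symm hvc huc (Or.inr htriD)
            (hperpD.trans ?_)
          ext t; simp; tauto
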